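/- Let 0 < R < 1 and let c : [R,1] → (0,∞) be C^{1,1} and satisfy the Herglotz condition. Then for every z ∈ (0, R/c(R)) the function β is differentiable at z with β'(z) = ∫_R^1 (c(r)/r^2) · (1 − (z c(r)/r)^2)^{-3/2} dr > 0; consequently β is strictly increasing and continuous on (0, R/c(R)) with finite one-sided limits at the endpoints 0 and R/c(R), hence a homeomorphism of [0, R/c(R)] (after continuous extension) onto its image. -/

import Mathlib

/-- `c` is `C^{1,1}` on `[R,1]`: differentiable with Lipschitz derivative. -/
def IsC11On (c : ℝ → ℝ) (R : ℝ) : Prop :=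
  ∃ c' : ℝ → ℝ, ∃ K : NNReal,
    (∀ r ∈ Set.Icc R 1, HasDerivWithinAt c (c' r) (Set.Icc R 1) r) ∧
    LipschitzOnWith K c' (Set.Icc R 1)

/-- The Herglotz condition: `d/dr (r / c r) > 0` on `[R,1]`. -/
def HerglotzCond (c : ℝ → ℝ) (R : ℝ) : Prop :=
  ∀ r ∈ Set.Icc R 1, 0 < derivWithin (fun s => s / c s) (Set.Icc R 1) r

/-- Half length `L(r)` of the maximal geodesic of radius `r`. -/
noncomputable def Lfun (c : ℝ → ℝ) (r : ℝ) : ℝ :=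
  ∫ s in r..1, (c s)⁻¹ * (Real.sqrt (1 - (r * c s / (s * c r)) ^ 2))⁻¹

/-- Half of the angular distance `α(r)` between the endpoints of the maximal geodesic
of radius `r`. -/
noncomputable def alphaFun (c : ℝ → ℝ) (r : ℝ) : ℝ :=
  ∫ s in r..1, (r * c s) / (c r * s ^ 2) * (Real.sqrt (1 - (r * c s / (s * c r)) ^ 2))⁻¹

/-- The angular advance `β(z)` of a geodesic segment from the inner boundary `r = R`
to the outer boundary `r = 1` with angular momentum `z`. -/
noncomputable def betaFun (c : ℝ → ℝ) (R : ℝ) (z : ℝ) : ℝ :=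
  ∫ r in R..1, (z * c r / r ^ 2) * (Real.sqrt (1 - (z * c r / r) ^ 2))⁻¹

open Set MeasureTheory Filter

/-- derivative of the integrand in `z`. -/
lemma integrand_hasDerivAt (p q x : ℝ) (hq : q ≠ 0)
    (h : 0 < 1 - (x * p / q) ^ 2) :
    HasDerivAt (fun z => (z * p / q ^ 2) * (Real.sqrt (1 - (z * p / q) ^ 2))⁻¹)
      ((p / q ^ 2) * ((Real.sqrt (1 - (x * p / q) ^ 2)) ^ 3)⁻¹) x := by
  have hs : 0 < Real.sqrt (1 - (x * p / q) ^ 2) := Real.sqrt_pos.2 h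
  have hs2 : Real.sqrt (1 - (x * p / q) ^ 2) ^ 2 = 1 - (x * p / q) ^ 2 :=
    Real.sq_sqrt h.le
  have h1 : HasDerivAt (fun z : ℝ => z * p / q) (p / q) x := by
    simpa using ((hasDerivAt_id x).mul_const p).div_const q
  have h2 : HasDerivAt (fun z : ℝ => 1 - (z * p / q) ^ 2)
      (-(2 * (x * p / q) ^ 1 * (p / q))) x := by
    simpa using (h1.pow 2).const_sub 1
  have h3 : HasDerivAt (fun z : ℝ => Real.sqrt (1 - (z * p / q) ^ 2))
      ((-(2 * (x * p / q) ^ 1 * (p / q))) / (2 * Real.sqrt (1 - (x * p / q) ^ 2))) x :=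
    h2.sqrt h.ne'
  have h5 : HasDerivAt (fun z : ℝ => z * p / q ^ 2) (p / q ^ 2) x := by
    simpa using ((hasDerivAt_id x).mul_const p).div_const (q ^ 2)
  have h6 := h5.mul (h3.inv hs.ne')
  refine h6.congr_deriv ?_
  simp only [Pi.inv_apply]
  set s := Real.sqrt (1 - (x * p / q) ^ 2) with hsdef
  have key : s ^ 2 * q ^ 2 = q ^ 2 - (x * p) ^ 2 := by
    field_simp at hs2; linarith
  field_simp
  linear_combination p * key

set_option maxHeartbeats 2000000 in
theorem stmt15 (R : ℝ) (hR0 : 0 < R) (hR1 : R < 1) (c : ℝ → ℝ)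
    (hpos : ∀ r ∈ Set.Icc R 1, 0 < c r)
    (hC11 : IsC11On c R) (hHerg : HerglotzCond c R) :
    (∀ z ∈ Set.Ioo 0 (R / c R),
      HasDerivAt (betaFun c R)
        (∫ r in R..1, (c r / r ^ 2) * (Real.sqrt (1 - (z * c r / r) ^ 2) ^ 3)⁻¹) z ∧
      0 < ∫ r in R..1, (c r / r ^ 2) * (Real.sqrt (1 - (z * c r / r) ^ 2) ^ 3)⁻¹) ∧
    StrictMonoOn (betaFun c R) (Set.Ioo 0 (R / c R)) ∧
    ContinuousOn (betaFun c R) (Set.Ioo 0 (R / c R)) ∧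
    (∃ b0 bR : ℝ,
      Filter.Tendsto (betaFun c R) (nhdsWithin 0 (Set.Ioo 0 (R / c R))) (nhds b0) ∧
      Filter.Tendsto (betaFun c R) (nhdsWithin (R / c R) (Set.Ioo 0 (R / c R)))
        (nhds bR)) ∧
    (∃ g : ℝ → ℝ, ContinuousOn g (Set.Icc 0 (R / c R)) ∧
      StrictMonoOn g (Set.Icc 0 (R / c R)) ∧
      Set.EqOn g (betaFun c R) (Set.Ioo 0 (R / c R)) ∧
      ∃ h : Set.Icc 0 (R / c R) ≃ₜ (g '' Set.Icc 0 (R / c R)),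
        ∀ x : Set.Icc 0 (R / c R), (h x : ℝ) = g x) := by
  obtain ⟨c', K, hc', hlip⟩ := hC11
  set z₀ := R / c R with hz₀def
  have hRIcc : R ∈ Icc R 1 := ⟨le_refl R, hR1.le⟩
  have hcR : 0 < c R := hpos R hRIcc
  have hz₀ : 0 < z₀ := div_pos hR0 hcR
  clear_value z₀
  have hccont : ContinuousOn c (Icc R 1) := fun r hr => (hc' r hr).continuousWithinAt
  have hc'cont : ContinuousOn c' (Icc R 1) := hlip.continuousOn
  -- the derivative of φ(s) = s / c s
  set ψ : ℝ → ℝ := fun r => (1 * c r - r * c' r) / c r ^ 2 with hψdef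
  have hφd : ∀ r ∈ Icc R 1, HasDerivWithinAt (fun s => s / c s) (ψ r) (Icc R 1) r :=
    fun r hr => (hasDerivWithinAt_id r _).div (hc' r hr) (hpos r hr).ne'
  have hψpos : ∀ r ∈ Icc R 1, 0 < ψ r := by
    intro r hr
    have h := hHerg r hr
    rwa [(hφd r hr).derivWithin ((uniqueDiffOn_Icc hR1) r hr)] at h
  have hψcont : ContinuousOn ψ (Icc R 1) := by
    apply ContinuousOn.div
    · exact (continuousOn_const.mul hccont).sub (continuousOn_id.mul hc'cont)
    · exact hccont.pow 2
    · exact fun r hr => pow_ne_zero _ (hpos r hr).ne'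
  obtain ⟨r₀, hr₀, hminψ⟩ := isCompact_Icc.exists_isMinOn (nonempty_Icc.2 hR1.le) hψcont
  set m := ψ r₀ with hmdef
  have hm : 0 < m := hψpos r₀ hr₀
  have hmle : ∀ r ∈ Icc R 1, m ≤ ψ r := fun r hr => hminψ hr
  clear_value m
  clear_value ψ
  -- lower bound for r / c r
  have hφcont : ContinuousOn (fun s => s / c s) (Icc R 1) :=
    fun r hr => (hφd r hr).continuousWithinAt
  have hφdiff : DifferentiableOn ℝ (fun s => s / c s) (interior (Icc R 1)) := by
    intro r hr
    rw [interior_Icc] at hr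
    exact (((hφd r (Ioo_subset_Icc_self hr)).hasDerivAt
      (Icc_mem_nhds hr.1 hr.2)).differentiableAt).differentiableWithinAt
  have hφderiv : ∀ r ∈ interior (Icc R 1), m ≤ deriv (fun s => s / c s) r := by
    intro r hr
    rw [interior_Icc] at hr
    rw [((hφd r (Ioo_subset_Icc_self hr)).hasDerivAt (Icc_mem_nhds hr.1 hr.2)).deriv]
    exact hmle r (Ioo_subset_Icc_self hr)
  have hkey : ∀ r ∈ Icc R 1, z₀ + m * (r - R) ≤ r / c r := by
    intro r hr
    have h := (convex_Icc R 1).mul_sub_le_image_sub_of_le_deriv hφcont hφdiff hφderiv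
      R hRIcc r hr hr.1
    simp only [hz₀def] at *
    linarith
  -- bounds on c
  obtain ⟨ra, hra, hminc⟩ := isCompact_Icc.exists_isMinOn (nonempty_Icc.2 hR1.le) hccont
  obtain ⟨rb, hrb, hmaxc⟩ := isCompact_Icc.exists_isMaxOn (nonempty_Icc.2 hR1.le) hccont
  set cmin := c ra with hcmindef
  set cmax := c rb with hcmaxdef
  have hcmin : 0 < cmin := hpos ra hra
  have hcminle : ∀ r ∈ Icc R 1, cmin ≤ c r := fun r hr => hminc hr
  have hcmaxle : ∀ r ∈ Icc R 1, c r ≤ cmax := fun r hr => hmaxc hr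
  have hcmax : 0 < cmax := lt_of_lt_of_le hcmin (hcminle rb hrb)
  clear_value cmin cmax
  have hrpos : ∀ r ∈ Icc R 1, (0:ℝ) < r := fun r hr => lt_of_lt_of_le hR0 hr.1
  have hz₀le : ∀ r ∈ Icc R 1, z₀ ≤ r / c r := by
    intro r hr
    have := hkey r hr
    nlinarith [hm, hr.1]
  have hcr_r : ∀ r ∈ Icc R 1, c r / r ≤ z₀⁻¹ := by
    intro r hr
    have h1 := hrpos r hr
    have h3 : z₀ * c r ≤ r := (le_div_iff₀ (hpos r hr)).1 (hz₀le r hr)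
    rw [div_le_iff₀ h1, ← sub_nonneg]
    have heq : z₀⁻¹ * r - c r = z₀⁻¹ * (r - z₀ * c r) := by field_simp
    rw [heq]
    exact mul_nonneg (inv_nonneg.2 hz₀.le) (by linarith)
  -- denominator bounds
  have hden : ∀ w ∈ Ico 0 z₀, ∀ z ∈ Icc 0 w, ∀ r ∈ Icc R 1,
      1 - (w / z₀) ^ 2 ≤ 1 - (z * c r / r) ^ 2 := by
    intro w hw z hz r hr
    have h1 := hrpos r hr
    have h2 : 0 ≤ z * c r / r := div_nonneg (mul_nonneg hz.1 (hpos r hr).le) h1.le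
    have h3 : z * c r / r ≤ w / z₀ := by
      have h4 := hcr_r r hr
      have h5 : 0 ≤ c r / r := div_nonneg (hpos r hr).le h1.le
      calc z * c r / r = z * (c r / r) := by ring
        _ ≤ w * z₀⁻¹ := mul_le_mul hz.2 h4 h5 hw.1
        _ = w / z₀ := (div_eq_mul_inv w z₀).symm
    nlinarith [pow_le_pow_left₀ h2 h3 2]
  have hw1 : ∀ w ∈ Ico 0 z₀, 0 < 1 - (w / z₀) ^ 2 := by
    intro w hw
    have h1 : w / z₀ < 1 := (div_lt_one hz₀).2 hw.2
    have h0 : 0 ≤ w / z₀ := div_nonneg hw.1 hz₀.le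
    nlinarith
  have hpos_den : ∀ z ∈ Ico 0 z₀, ∀ r ∈ Icc R 1, 0 < 1 - (z * c r / r) ^ 2 := by
    intro z hz r hr
    have := hden z hz z ⟨hz.1, le_refl z⟩ r hr
    linarith [hw1 z hz]
  -- continuity of the integrands in r
  have hsqc : ∀ z ∈ Ico 0 z₀,
      ContinuousOn (fun r => Real.sqrt (1 - (z * c r / r) ^ 2)) (Icc R 1) := by
    intro z hz
    apply Real.continuous_sqrt.comp_continuousOn
    apply continuousOn_const.sub
    exact ((continuousOn_const.mul hccont).div continuousOn_id
      (fun r hr => (hrpos r hr).ne')).pow 2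
  have hsqpos : ∀ z ∈ Ico 0 z₀, ∀ r ∈ Icc R 1,
      0 < Real.sqrt (1 - (z * c r / r) ^ 2) :=
    fun z hz r hr => Real.sqrt_pos.2 (hpos_den z hz r hr)
  have hFc : ∀ z ∈ Ico 0 z₀, ContinuousOn
      (fun r => (z * c r / r ^ 2) * (Real.sqrt (1 - (z * c r / r) ^ 2))⁻¹) (Icc R 1) := by
    intro z hz
    apply ContinuousOn.mul
    · exact (continuousOn_const.mul hccont).div (continuousOn_id.pow 2)
        (fun r hr => pow_ne_zero 2 (hrpos r hr).ne')
    · exact (hsqc z hz).inv₀ (fun r hr => (hsqpos z hz r hr).ne')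
  have hF'c : ∀ z ∈ Ico 0 z₀, ContinuousOn
      (fun r => (c r / r ^ 2) * (Real.sqrt (1 - (z * c r / r) ^ 2) ^ 3)⁻¹) (Icc R 1) := by
    intro z hz
    apply ContinuousOn.mul
    · exact hccont.div (continuousOn_id.pow 2)
        (fun r hr => pow_ne_zero 2 (hrpos r hr).ne')
    · exact ((hsqc z hz).pow 3).inv₀
        (fun r hr => pow_ne_zero 3 (hsqpos z hz r hr).ne')
  have huIoc : uIoc R 1 ⊆ Icc R 1 := by
    rw [uIoc_of_le hR1.le]; exact Ioc_subset_Icc_self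
  have huIcc : uIcc R 1 = Icc R 1 := uIcc_of_le hR1.le
  have hFint : ∀ z ∈ Ico 0 z₀, IntervalIntegrable
      (fun r => (z * c r / r ^ 2) * (Real.sqrt (1 - (z * c r / r) ^ 2))⁻¹) volume R 1 := by
    intro z hz
    apply ContinuousOn.intervalIntegrable
    rw [huIcc]; exact hFc z hz
  have hF'int : ∀ z ∈ Ico 0 z₀, IntervalIntegrable
      (fun r => (c r / r ^ 2) * (Real.sqrt (1 - (z * c r / r) ^ 2) ^ 3)⁻¹) volume R 1 := by
    intro z hz
    apply ContinuousOn.intervalIntegrable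
    rw [huIcc]; exact hF'c z hz
  -- Part A : derivative
  have hA : ∀ z ∈ Ioo 0 z₀, HasDerivAt (betaFun c R)
      (∫ r in R..1, (c r / r ^ 2) * (Real.sqrt (1 - (z * c r / r) ^ 2) ^ 3)⁻¹) z := by
    intro z hz
    set w := (z + z₀) / 2 with hwdef
    have hwIco : w ∈ Ico 0 z₀ := ⟨by simp only [hwdef]; linarith [hz.1], by simp only [hwdef]; linarith [hz.2]⟩
    set ε := min z ((z₀ - z) / 2) with hεdef
    have hε0 : 0 < ε := lt_min hz.1 (by linarith [hz.2])
    have hball : ∀ x ∈ Metric.ball z ε, 0 ≤ x ∧ x ≤ w := by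
      intro x hx
      rw [Metric.mem_ball, Real.dist_eq, abs_lt] at hx
      have h1 := min_le_left z ((z₀ - z) / 2)
      have h2 := min_le_right z ((z₀ - z) / 2)
      constructor
      · simp only [hεdef] at hx; nlinarith [hx.1]
      · simp only [hεdef, hwdef] at hx ⊢; nlinarith [hx.2]
    have hballIco : ∀ x ∈ Metric.ball z ε, x ∈ Ico 0 z₀ :=
      fun x hx => ⟨(hball x hx).1, lt_of_le_of_lt (hball x hx).2 hwIco.2⟩
    set s₀ := Real.sqrt (1 - (w / z₀) ^ 2) with hs₀def
    have hs₀ : 0 < s₀ := Real.sqrt_pos.2 (hw1 w hwIco)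
    have key := intervalIntegral.hasDerivAt_integral_of_dominated_loc_of_deriv_le
      (F := fun x r => (x * c r / r ^ 2) * (Real.sqrt (1 - (x * c r / r) ^ 2))⁻¹)
      (F' := fun x r => (c r / r ^ 2) * (Real.sqrt (1 - (x * c r / r) ^ 2) ^ 3)⁻¹)
      (bound := fun _ => (cmax / R ^ 2) * (s₀ ^ 3)⁻¹)
      (μ := volume) (a := R) (b := 1) (x₀ := z) (Metric.ball_mem_nhds z hε0)
      ?_ ?_ ?_ ?_ ?_ ?_
    · exact key.2
    · filter_upwards [Metric.ball_mem_nhds z hε0] with x hx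
      exact (ContinuousOn.mono (hFc x (hballIco x hx)) huIoc).aestronglyMeasurable
        measurableSet_uIoc
    · exact hFint z ⟨hz.1.le, hz.2⟩
    · have hzIco : z ∈ Ico 0 z₀ := ⟨hz.1.le, hz.2⟩
      exact (ContinuousOn.mono (hF'c z hzIco) huIoc).aestronglyMeasurable
        measurableSet_uIoc
    · apply Filter.Eventually.of_forall
      intro r hr x hx
      have hrI : r ∈ Icc R 1 := huIoc hr
      have hxw := hball x hx
      have hs : s₀ ≤ Real.sqrt (1 - (x * c r / r) ^ 2) :=
        Real.sqrt_le_sqrt (hden w hwIco x ⟨hxw.1, hxw.2⟩ r hrI)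
      have hsp : 0 < Real.sqrt (1 - (x * c r / r) ^ 2) := lt_of_lt_of_le hs₀ hs
      rw [Real.norm_eq_abs, abs_of_nonneg (mul_nonneg
        (div_nonneg (hpos r hrI).le (sq_nonneg r))
        (inv_nonneg.2 (pow_nonneg (Real.sqrt_nonneg _) 3)))]
      apply mul_le_mul
      · apply div_le_div₀ hcmax.le (hcmaxle r hrI) (pow_pos hR0 2)
        exact pow_le_pow_left₀ hR0.le hrI.1 2
      · apply inv_anti₀ (pow_pos hs₀ 3)
        exact pow_le_pow_left₀ hs₀.le hs 3
      · positivity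
      · positivity
    · exact intervalIntegrable_const
    · apply Filter.Eventually.of_forall
      intro r hr x hx
      have hrI : r ∈ Icc R 1 := huIoc hr
      exact integrand_hasDerivAt (c r) r x (hrpos r hrI).ne'
        (hpos_den x (hballIco x hx) r hrI)
  -- Part A : positivity
  have hApos : ∀ z ∈ Ioo 0 z₀,
      0 < ∫ r in R..1, (c r / r ^ 2) * (Real.sqrt (1 - (z * c r / r) ^ 2) ^ 3)⁻¹ := by
    intro z hz
    apply intervalIntegral.intervalIntegral_pos_of_pos_on
    · exact hF'int z ⟨hz.1.le, hz.2⟩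
    · intro x hx
      have hxI : x ∈ Icc R 1 := Ioo_subset_Icc_self hx
      have h1 := hsqpos z ⟨hz.1.le, hz.2⟩ x hxI
      exact mul_pos (div_pos (hpos x hxI) (pow_pos (hrpos x hxI) 2))
        (inv_pos.2 (pow_pos h1 3))
    · exact hR1
  -- Part B : strict monotonicity
  have hBmono : StrictMonoOn (betaFun c R) (Ioo 0 z₀) := by
    apply strictMonoOn_of_deriv_pos (convex_Ioo 0 z₀)
    · exact fun x hx => (hA x hx).continuousAt.continuousWithinAt
    · intro x hx
      rw [interior_Ioo] at hx
      rw [(hA x hx).deriv]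
      exact hApos x hx
  -- Part C : continuity
  have hCcont : ContinuousOn (betaFun c R) (Ioo 0 z₀) :=
    fun x hx => (hA x hx).continuousAt.continuousWithinAt
  -- Part D : bounds and limits
  have hβnn : ∀ z ∈ Ioo 0 z₀, 0 ≤ betaFun c R z := by
    intro z hz
    apply intervalIntegral.integral_nonneg hR1.le
    intro r hr
    exact mul_nonneg (div_nonneg (mul_nonneg hz.1.le (hpos r hr).le) (sq_nonneg r))
      (inv_nonneg.2 (Real.sqrt_nonneg _))
  set C0 := (z₀ * cmax / R ^ 2) * (Real.sqrt (m * cmin))⁻¹ with hC0def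
  clear_value C0
  have hDint : IntervalIntegrable (fun r => C0 * (r - R) ^ (-(1:ℝ)/2)) volume R 1 := by
    have h1 : IntervalIntegrable (fun x : ℝ => x ^ (-(1:ℝ)/2)) volume 0 (1 - R) :=
      intervalIntegral.intervalIntegrable_rpow' (by norm_num)
    have h2 : IntervalIntegrable (fun x : ℝ => (x - R) ^ (-(1:ℝ)/2)) volume R 1 := by
      have := h1.comp_sub_right R
      simpa using this
    exact h2.const_mul C0
  have hβle : ∀ z ∈ Ioo 0 z₀, betaFun c R z ≤ ∫ r in R..1, C0 * (r - R) ^ (-(1:ℝ)/2) := by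
    intro z hz
    apply intervalIntegral.integral_mono_ae_restrict hR1.le
    · exact hFint z ⟨hz.1.le, hz.2⟩
    · exact hDint
    · have hne : ∀ᵐ r ∂(volume.restrict (Icc R 1)), r ≠ R := by
        apply ae_restrict_of_ae
        rw [MeasureTheory.ae_iff]
        have : {x : ℝ | ¬ x ≠ R} = {R} := by ext x; simp
        rw [this]
        exact Real.volume_singleton
      filter_upwards [hne, ae_restrict_mem measurableSet_Icc] with r hrne hr
      have ha : 0 < c r := hpos r hr
      have hr0 : 0 < r := hrpos r hr
      have hrR : R < r := lt_of_le_of_ne hr.1 (Ne.symm hrne)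
      have hq1 : cmin ≤ c r / r := by
        rw [le_div_iff₀ hr0]
        nlinarith [hcminle r hr, hr.2, hcmin]
      have hq2 : m * cmin * (r - R) ≤ 1 - z * c r / r := by
        have hkey' := hkey r hr
        have h6 : (c r / r) * (r / c r - z) = 1 - z * c r / r := by
          field_simp
        have h7 : m * (r - R) ≤ r / c r - z := by linarith [hz.2]
        have hcrr : 0 < c r / r := div_pos ha hr0
        have hd1 : 0 ≤ m * (r - R) * (c r / r - cmin) :=
          mul_nonneg (mul_nonneg hm.le (by linarith)) (by linarith [hq1])
        have hd2 : 0 ≤ (c r / r) * ((r / c r - z) - m * (r - R)) :=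
          mul_nonneg hcrr.le (by linarith)
        calc m * cmin * (r - R) ≤ (c r / r) * (m * (r - R)) := by nlinarith [hd1]
          _ ≤ (c r / r) * (r / c r - z) := by nlinarith [hd2]
          _ = 1 - z * c r / r := h6
      have ht0 : 0 ≤ z * c r / r := div_nonneg (mul_nonneg hz.1.le ha.le) hr0.le
      have ht1 : z * c r / r ≤ 1 := by
        have : 0 ≤ m * cmin * (r - R) := mul_nonneg (mul_nonneg hm.le hcmin.le) (by linarith)
        linarith [hq2]
      have hu : m * cmin * (r - R) ≤ 1 - (z * c r / r) ^ 2 := by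
        nlinarith [hq2, mul_nonneg ht0 (sub_nonneg.2 ht1)]
      have hmc : (0:ℝ) ≤ m * cmin := by positivity
      have hsqrt : Real.sqrt (m * cmin) * Real.sqrt (r - R)
          ≤ Real.sqrt (1 - (z * c r / r) ^ 2) := by
        rw [← Real.sqrt_mul hmc]
        exact Real.sqrt_le_sqrt hu
      have hsp1 : 0 < Real.sqrt (m * cmin) := Real.sqrt_pos.2 (by positivity)
      have hsp2 : 0 < Real.sqrt (r - R) := Real.sqrt_pos.2 (by linarith)
      have hinv : (Real.sqrt (1 - (z * c r / r) ^ 2))⁻¹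
          ≤ (Real.sqrt (m * cmin))⁻¹ * (Real.sqrt (r - R))⁻¹ := by
        rw [← mul_inv]
        exact inv_anti₀ (mul_pos hsp1 hsp2) hsqrt
      have hfac : z * c r / r ^ 2 ≤ z₀ * cmax / R ^ 2 := by
        apply div_le_div₀ (by positivity)
        · exact mul_le_mul hz.2.le (hcmaxle r hr) ha.le hz₀.le
        · exact pow_pos hR0 2
        · exact pow_le_pow_left₀ hR0.le hr.1 2
      have hrw : (r - R) ^ (-(1:ℝ)/2) = (Real.sqrt (r - R))⁻¹ := by
        rw [Real.sqrt_eq_rpow, ← Real.rpow_neg (by linarith : (0:ℝ) ≤ r - R)]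
        norm_num
      calc (z * c r / r ^ 2) * (Real.sqrt (1 - (z * c r / r) ^ 2))⁻¹
          ≤ (z₀ * cmax / R ^ 2) * ((Real.sqrt (m * cmin))⁻¹ * (Real.sqrt (r - R))⁻¹) := by
            apply mul_le_mul hfac hinv (inv_nonneg.2 (Real.sqrt_nonneg _)) (by positivity)
        _ = C0 * (r - R) ^ (-(1:ℝ)/2) := by rw [hrw, hC0def]; ring
  have hbddA : BddAbove (betaFun c R '' Ioo 0 z₀) := by
    refine ⟨∫ r in R..1, C0 * (r - R) ^ (-(1:ℝ)/2), ?_⟩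
    rintro y ⟨x, hx, rfl⟩
    exact hβle x hx
  have hbddB : BddBelow (betaFun c R '' Ioo 0 z₀) := by
    refine ⟨0, ?_⟩
    rintro y ⟨x, hx, rfl⟩
    exact hβnn x hx
  have hIoone : (Ioo (0:ℝ) z₀).Nonempty := ⟨z₀ / 2, by constructor <;> linarith⟩
  set b0 := sInf (betaFun c R '' Ioo 0 z₀) with hb0def
  set bR := sSup (betaFun c R '' Ioo 0 z₀) with hbRdef
  have htR : Tendsto (betaFun c R) (nhdsWithin z₀ (Ioo 0 z₀)) (nhds bR) :=
    (hBmono.monotoneOn.tendsto_nhdsWithin_Ioo_left hIoone hbddA).mono_left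
      (nhdsWithin_mono _ Ioo_subset_Iio_self)
  have ht0 : Tendsto (betaFun c R) (nhdsWithin 0 (Ioo 0 z₀)) (nhds b0) :=
    (hBmono.monotoneOn.tendsto_nhdsWithin_Ioo_right hIoone hbddB).mono_left
      (nhdsWithin_mono _ Ioo_subset_Ioi_self)
  -- Part E : extension
  have hb0lt : ∀ x ∈ Ioo 0 z₀, b0 < betaFun c R x := by
    intro x hx
    have h1 : x / 2 ∈ Ioo 0 z₀ := ⟨by linarith [hx.1], by linarith [hx.1, hx.2]⟩
    exact lt_of_le_of_lt (csInf_le hbddB ⟨x / 2, h1, rfl⟩)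
      (hBmono h1 hx (by linarith [hx.1]))
  have hltbR : ∀ x ∈ Ioo 0 z₀, betaFun c R x < bR := by
    intro x hx
    have h1 : (x + z₀) / 2 ∈ Ioo 0 z₀ := ⟨by linarith [hx.1, hx.2], by linarith [hx.2]⟩
    exact lt_of_lt_of_le (hBmono hx h1 (by linarith [hx.2]))
      (le_csSup hbddA ⟨(x + z₀) / 2, h1, rfl⟩)
  have hb0bR : b0 < bR := by
    obtain ⟨t, ht⟩ := hIoone
    exact lt_trans (hb0lt t ht) (hltbR t ht)
  set g : ℝ → ℝ := fun x => if x ≤ 0 then b0 else if x < z₀ then betaFun c R x else bR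
    with hgdef
  have hgeq : EqOn g (betaFun c R) (Ioo 0 z₀) := by
    intro x hx
    simp only [hgdef]
    rw [if_neg (not_le.2 hx.1), if_pos hx.2]
  have hg0 : g 0 = b0 := by simp [hgdef]
  have hgz₀ : g z₀ = bR := by
    simp only [hgdef]
    rw [if_neg (not_le.2 hz₀), if_neg (lt_irrefl z₀)]
  have hgmono : StrictMonoOn g (Icc 0 z₀) := by
    intro x hx y hy hxy
    rcases eq_or_lt_of_le hx.1 with h0x | h0x
    · rw [← h0x, hg0]
      have hy0 : 0 < y := h0x.symm ▸ hxy
      rcases eq_or_lt_of_le hy.2 with hyz | hyz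
      · rw [hyz, hgz₀]; exact hb0bR
      · rw [hgeq ⟨hy0, hyz⟩]; exact hb0lt y ⟨hy0, hyz⟩
    · have hxIoo : x ∈ Ioo 0 z₀ := ⟨h0x, lt_of_lt_of_le hxy hy.2⟩
      rw [hgeq hxIoo]
      rcases eq_or_lt_of_le hy.2 with hyz | hyz
      · rw [hyz, hgz₀]; exact hltbR x hxIoo
      · rw [hgeq ⟨lt_trans h0x hxy, hyz⟩]
        exact hBmono hxIoo ⟨lt_trans h0x hxy, hyz⟩ hxy
  have hset : Icc (0:ℝ) z₀ = (Ioo 0 z₀ ∪ {0}) ∪ {z₀} := by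
    rw [Ioo_union_left hz₀, Ico_union_right hz₀.le]
  have hbot0 : nhdsWithin (0:ℝ) {z₀} = ⊥ := by
    rw [← Filter.not_neBot]
    intro h
    have := mem_closure_iff_nhdsWithin_neBot.2 h
    rw [closure_singleton] at this
    simp only [mem_singleton_iff] at this
    exact absurd this (by linarith)
  have hbotz₀ : nhdsWithin z₀ ({0} : Set ℝ) = ⊥ := by
    rw [← Filter.not_neBot]
    intro h
    have := mem_closure_iff_nhdsWithin_neBot.2 h
    rw [closure_singleton] at this
    simp only [mem_singleton_iff] at this
    exact absurd this (by linarith)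
  have hgcont : ContinuousOn g (Icc 0 z₀) := by
    intro x hx
    rcases eq_or_lt_of_le hx.1 with h0x | h0x
    · -- x = 0
      rw [← h0x]
      unfold ContinuousWithinAt
      rw [hset, nhdsWithin_union, nhdsWithin_union, hg0]
      apply Filter.Tendsto.sup
      apply Filter.Tendsto.sup
      · exact ht0.congr' (Filter.eventuallyEq_of_mem self_mem_nhdsWithin
          (fun y hy => (hgeq hy).symm))
      · rw [nhdsWithin_singleton]
        rw [show ((0:ℝ)) = (0:ℝ) from rfl]
        have : g 0 = b0 := hg0
        rw [← this]
        exact tendsto_pure_nhds g 0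
      · rw [hbot0]; exact tendsto_bot
    · rcases eq_or_lt_of_le hx.2 with hxz | hxz
      · -- x = z₀
        rw [hxz]
        unfold ContinuousWithinAt
        rw [hset, nhdsWithin_union, nhdsWithin_union, hgz₀]
        apply Filter.Tendsto.sup
        apply Filter.Tendsto.sup
        · exact htR.congr' (Filter.eventuallyEq_of_mem self_mem_nhdsWithin
            (fun y hy => (hgeq hy).symm))
        · rw [hbotz₀]; exact tendsto_bot
        · rw [nhdsWithin_singleton]
          have : g z₀ = bR := hgz₀
          rw [← this]
          exact tendsto_pure_nhds g z₀
      · -- interior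
        have hxIoo : x ∈ Ioo 0 z₀ := ⟨h0x, hxz⟩
        apply ContinuousAt.continuousWithinAt
        apply (hA x hxIoo).continuousAt.congr
        exact Filter.eventuallyEq_of_mem (isOpen_Ioo.mem_nhds hxIoo)
          (fun y hy => (hgeq hy).symm)
  -- assemble
  refine ⟨fun z hz => ⟨hA z hz, hApos z hz⟩, hBmono, hCcont, ⟨b0, bR, ht0, htR⟩, ?_⟩
  refine ⟨g, hgcont, hgmono, hgeq, ?_⟩
  haveI : CompactSpace (Icc (0:ℝ) z₀) := isCompact_iff_compactSpace.1 isCompact_Icc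
  have hfc : Continuous ((Icc (0:ℝ) z₀).restrict g) := hgcont.restrict
  have hfinj : Function.Injective ((Icc (0:ℝ) z₀).restrict g) := by
    intro a b hab
    exact Subtype.ext (hgmono.injOn a.2 b.2 hab)
  have hemb := (hfc.isClosedEmbedding hfinj).toIsEmbedding
  have hrange : range ((Icc (0:ℝ) z₀).restrict g) = g '' Icc 0 z₀ :=
    (image_eq_range g (Icc 0 z₀)).symm
  exact ⟨hemb.toHomeomorph.trans (Homeomorph.setCongr hrange),
    fun x => rfl⟩
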